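/- Let U be a real n×q matrix, let B be an invertible q×q real matrix, let η ∈ ℝ^q, and let β : ℝ^q → ℝⁿ be differentiable at η with Uᵀ·β(y) = y for all y near η. Define β'(y') = β((Bᵀ)⁻¹·y'), which satisfies (U·B)ᵀ·β'(y') = y' for y' near Bᵀη. Let J be the Jacobian of β at η and J' the Jacobian of β' at Bᵀη. Then J'·(U·B)ᵀ = J·Uᵀ; i.e., the matrix of absolute sensitivities A = J·Uᵀ is independent of the choice of basis matrix U for the space of conserved quantities. -/

import Mathlib

open Matrix

theorem stmt5 {n q : ℕ} (hn : 0 < n) (hq : 0 < q)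
    (U : Matrix (Fin n) (Fin q) ℝ)
    (B : Matrix (Fin q) (Fin q) ℝ) (hB : IsUnit B.det)
    (η : Fin q → ℝ) (β β' : (Fin q → ℝ) → (Fin n → ℝ))
    (hβ' : ∀ y', β' y' = β ((Bᵀ)⁻¹.mulVec y'))
    (J J' : Matrix (Fin n) (Fin q) ℝ)
    (hJ : HasFDerivAt β (LinearMap.toContinuousLinearMap (Matrix.mulVecLin J)) η)
    (hJ' : HasFDerivAt β' (LinearMap.toContinuousLinearMap (Matrix.mulVecLin J'))
      (Bᵀ.mulVec η))
    (hsec : ∀ᶠ y in nhds η, Uᵀ.mulVec (β y) = y) :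
    J' * (U * B)ᵀ = J * Uᵀ := by
  have hBT : IsUnit Bᵀ.det := by rwa [Matrix.det_transpose]
  have hinv : (Bᵀ)⁻¹ * Bᵀ = 1 := Matrix.nonsing_inv_mul _ hBT
  have hlin : HasFDerivAt (fun y' => (Bᵀ)⁻¹.mulVec y')
      (LinearMap.toContinuousLinearMap (Matrix.mulVecLin (Bᵀ)⁻¹)) (Bᵀ.mulVec η) :=
    (LinearMap.toContinuousLinearMap (Matrix.mulVecLin (Bᵀ)⁻¹)).hasFDerivAt
  have hpt : (Bᵀ)⁻¹.mulVec (Bᵀ.mulVec η) = η := by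
    rw [Matrix.mulVec_mulVec, hinv, Matrix.one_mulVec]
  have hJη : HasFDerivAt β (LinearMap.toContinuousLinearMap (Matrix.mulVecLin J))
      ((Bᵀ)⁻¹.mulVec (Bᵀ.mulVec η)) := by rwa [hpt]
  have hcomp : HasFDerivAt β'
      ((LinearMap.toContinuousLinearMap (Matrix.mulVecLin J)).comp
        (LinearMap.toContinuousLinearMap (Matrix.mulVecLin (Bᵀ)⁻¹))) (Bᵀ.mulVec η) := by
    have := hJη.comp (Bᵀ.mulVec η) hlin
    have hfun : β' = β ∘ fun y' => (Bᵀ)⁻¹.mulVec y' := funext hβ'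
    rwa [hfun]
  have huniq := hJ'.unique hcomp
  have hJ'eq : J' = J * (Bᵀ)⁻¹ := by
    ext i j
    have := congrArg (fun (L : (Fin q → ℝ) →L[ℝ] (Fin n → ℝ)) => L (Pi.single j 1) i) huniq
    simpa [Matrix.mulVecLin, Matrix.mulVec_single, Matrix.mulVec_mulVec, Matrix.mul_apply,
      Matrix.mulVec, dotProduct, Pi.single_apply, mul_ite, Finset.sum_ite_eq,
      Finset.sum_ite_eq'] using this
  rw [hJ'eq, Matrix.transpose_mul, ← Matrix.mul_assoc, Matrix.mul_assoc J, hinv,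
    Matrix.mul_one]
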